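/- For 0 < p < 2, ε > 0, and any real x, the function w ↦ w·x² + φ_p(w), where φ_p(w) = ((2-p)/2)·((2/p)·w)^(p/(p-2)) + ε·w, attains its minimum over w > 0 at w_opt = (p/2)·(x² + ε)^((p-2)/2), and the minimum value equals (x² + ε)^(p/2). -/

import Mathlib

private lemma amgm_strict {a b θ : ℝ} (ha : 0 < a) (hb : 0 < b) (hab : a ≠ b)
    (h0 : 0 < θ) (h1 : θ < 1) : a ^ θ * b ^ (1 - θ) < θ * a + (1 - θ) * b := by
  have h1θ : (0:ℝ) < 1 - θ := by linarith
  have hsum : θ + (1 - θ) = 1 := by ring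
  have key := strictConcaveOn_log_Ioi.2 (Set.mem_Ioi.2 ha) (Set.mem_Ioi.2 hb) hab h0 h1θ hsum
  have hz : 0 < θ * a + (1 - θ) * b := by nlinarith
  calc a ^ θ * b ^ (1 - θ)
      = Real.exp (θ * Real.log a + (1 - θ) * Real.log b) := by
        rw [Real.exp_add, Real.rpow_def_of_pos ha, Real.rpow_def_of_pos hb]; ring_nf
    _ < Real.exp (Real.log (θ * a + (1 - θ) * b)) := by
        apply Real.exp_lt_exp.2
        simpa [smul_eq_mul] using key
    _ = θ * a + (1 - θ) * b := Real.exp_log hz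

/-- Variational identity: for 0 < p < 2 and ε > 0, the function
w ↦ w·x² + φ_p(w) over w > 0 attains its minimum uniquely at
w_opt = (p/2)·(x²+ε)^((p-2)/2), with minimum value (x²+ε)^(p/2). -/
theorem stmt_0 (p ε x : ℝ) (hp : 0 < p) (hp2 : p < 2) (hε : 0 < ε) :
    let φ : ℝ → ℝ := fun w => ((2 - p) / 2) * ((2 / p) * w) ^ (p / (p - 2)) + ε * w
    let wopt : ℝ := (p / 2) * (x ^ 2 + ε) ^ ((p - 2) / 2)
    0 < wopt ∧
    (∀ w : ℝ, 0 < w → (x ^ 2 + ε) ^ (p / 2) ≤ w * x ^ 2 + φ w) ∧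
    wopt * x ^ 2 + φ wopt = (x ^ 2 + ε) ^ (p / 2) ∧
    (∀ w : ℝ, 0 < w → w * x ^ 2 + φ w = (x ^ 2 + ε) ^ (p / 2) → w = wopt) := by
  intro φ wopt
  set s : ℝ := x ^ 2 + ε with hs_def
  have hs : 0 < s := by positivity
  have hp2' : p - 2 ≠ 0 := by linarith
  have hθ0 : (0:ℝ) < p / 2 := by linarith
  have hθ1 : p / 2 < 1 := by linarith
  -- rewrite objective: for t = (2/p)*w, f(w) = (p/2)*(t*s) + (1-p/2)*t^(p/(p-2))
  have hobj : ∀ w : ℝ, 0 < w →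
      w * x ^ 2 + φ w = (p/2) * (((2/p)*w) * s) + (1 - p/2) * ((2/p)*w) ^ (p/(p-2)) := by
    intro w hw
    simp only [φ, hs_def]
    field_simp
    ring
  -- geometric mean identity
  have hgeom : ∀ t : ℝ, 0 < t → (t * s) ^ (p/2) * (t ^ (p/(p-2))) ^ (1 - p/2) = s ^ (p/2) := by
    intro t ht
    rw [Real.mul_rpow ht.le hs.le, ← Real.rpow_mul ht.le]
    have he : p/(p-2) * (1 - p/2) = -(p/2) := by field_simp; ring
    rw [he]
    rw [mul_comm (t ^ (p/2)) (s ^ (p/2)), mul_assoc, ← Real.rpow_add ht]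
    simp
  -- optimal t
  have htopt : (2/p) * wopt = s ^ ((p-2)/2) := by
    simp only [wopt, ← hs_def]
    field_simp
  have htopt_pos : (0:ℝ) < s ^ ((p-2)/2) := Real.rpow_pos_of_pos hs _
  have hwopt_pos : 0 < wopt := by
    simp only [wopt]; positivity
  -- at the optimum a = b = s^(p/2)
  have ha_opt : s ^ ((p-2)/2) * s = s ^ (p/2) := by
    nth_rewrite 2 [← Real.rpow_one s]
    rw [← Real.rpow_add hs]
    congr 1; ring
  have hb_opt : (s ^ ((p-2)/2)) ^ (p/(p-2)) = s ^ (p/2) := by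
    rw [← Real.rpow_mul hs.le]
    congr 1
    field_simp
  refine ⟨hwopt_pos, ?_, ?_, ?_⟩
  · -- lower bound
    intro w hw
    rw [hobj w hw]
    have ht : 0 < (2/p)*w := by positivity
    have hge : (((2/p)*w) * s) ^ (p/2) * (((2/p)*w) ^ (p/(p-2))) ^ (1 - p/2) ≤
        (p/2) * (((2/p)*w) * s) + (1 - p/2) * ((2/p)*w) ^ (p/(p-2)) :=
      Real.geom_mean_le_arith_mean2_weighted hθ0.le (by linarith)
        (by positivity : (0:ℝ) ≤ ((2/p)*w) * s)
        (Real.rpow_pos_of_pos ht (p/(p-2))).le (by ring)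
    calc s ^ (p/2) = (((2/p)*w) * s) ^ (p/2) * (((2/p)*w) ^ (p/(p-2))) ^ (1 - p/2) :=
          (hgeom _ ht).symm
      _ ≤ (p/2) * (((2/p)*w) * s) + (1 - p/2) * ((2/p)*w) ^ (p/(p-2)) := hge
  · -- equality at wopt
    rw [hobj wopt hwopt_pos, htopt, ha_opt, hb_opt]
    ring
  · -- uniqueness
    intro w hw heq
    by_contra hne
    have ht : 0 < (2/p)*w := by positivity
    have htne : (2/p)*w ≠ s ^ ((p-2)/2) := by
      intro h
      apply hne
      have : w = (p/2) * ((2/p)*w) := by field_simp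
      rw [this, h]
    have hab : ((2/p)*w) * s ≠ ((2/p)*w) ^ (p/(p-2)) := by
      intro h
      apply htne
      set t := (2/p)*w with htdef
      have hst : s = t ^ (2/(p-2)) := by
        have h1 : t ^ (p/(p-2)) / t = t ^ (2/(p-2)) := by
          nth_rewrite 2 [← Real.rpow_one t]
          rw [← Real.rpow_sub ht]
          congr 1
          field_simp
          ring
        rw [← h1, ← h]
        field_simp
      rw [hst, ← Real.rpow_mul ht.le]
      have : 2/(p-2) * ((p-2)/2) = 1 := by field_simp
      rw [this, Real.rpow_one]
    have hstrict := amgm_strict (by positivity : (0:ℝ) < ((2/p)*w) * s)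
      (Real.rpow_pos_of_pos ht (p/(p-2))) hab hθ0 hθ1
    rw [hgeom _ ht] at hstrict
    rw [hobj w hw] at heq
    linarith
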